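/- Let X and Y be one-sided shift spaces such that neither contains an aperiodic isolated point. Then every continuous orbit equivalence h: X → Y maps eventually periodic points to eventually periodic points. -/
import Mathlib


open Function Set

/-- The shift map on one-sided sequences. -/
def shiftMap {A : Type*} : (ℕ → A) → (ℕ → A) := fun x n => x (n + 1)

/-- A one-sided shift space: a closed, shift-invariant subset of `A^ℕ`. -/
def IsShiftSpace {A : Type*} [TopologicalSpace A] (X : Set (ℕ → A)) : Prop :=
  IsClosed X ∧ ∀ x ∈ X, shiftMap x ∈ X

/-- A point is eventually periodic if `σ^n(x) = σ^m(x)` for some `n ≠ m`. -/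
def EventuallyPeriodic {A : Type*} (x : ℕ → A) : Prop :=
  ∃ p m : ℕ, 0 < p ∧ shiftMap^[m + p] x = shiftMap^[m] x

/-- `x` is an isolated point of `X`. -/
def IsolatedIn {A : Type*} [TopologicalSpace A] (X : Set (ℕ → A)) (x : ℕ → A) : Prop :=
  ∃ U : Set (ℕ → A), IsOpen U ∧ U ∩ X = {x}

lemma shift_iter_apply {A : Type*} (n : ℕ) (x : ℕ → A) (t : ℕ) :
    shiftMap^[n] x t = x (t + n) := by
  induction n generalizing x t with
  | zero => rfl
  | succ n ih =>
    rw [Function.iterate_succ_apply, ih]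
    simp only [shiftMap]; ring_nf

lemma mem_iter {A : Type*} [TopologicalSpace A] {X : Set (ℕ → A)} (hX : IsShiftSpace X)
    (n : ℕ) {x : ℕ → A} (hx : x ∈ X) : shiftMap^[n] x ∈ X := by
  induction n with
  | zero => exact hx
  | succ n ih => rw [Function.iterate_succ_apply']; exact hX.2 _ ih

lemma ep_shift {A : Type*} {x : ℕ → A} (n : ℕ) (hx : EventuallyPeriodic x) :
    EventuallyPeriodic (shiftMap^[n] x) := by
  obtain ⟨p, m, hp, heq⟩ := hx
  refine ⟨p, m, hp, ?_⟩
  funext t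
  simp only [shift_iter_apply]
  have := congrFun heq (t + n)
  simp only [shift_iter_apply] at this
  convert this using 2 <;> ring

lemma ep_unshift {A : Type*} {x : ℕ → A} (n : ℕ)
    (hx : EventuallyPeriodic (shiftMap^[n] x)) : EventuallyPeriodic x := by
  obtain ⟨p, m, hp, heq⟩ := hx
  refine ⟨p, m + n, hp, ?_⟩
  funext t
  simp only [shift_iter_apply]
  have := congrFun heq t
  simp only [shift_iter_apply] at this
  convert this using 2 <;> ring

lemma ep_of_ne {A : Type*} {x : ℕ → A} {a b : ℕ} (hab : a ≠ b)
    (h : shiftMap^[a] x = shiftMap^[b] x) : EventuallyPeriodic x := by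
  rcases lt_or_gt_of_ne hab with hlt | hlt
  · refine ⟨b - a, a, by omega, ?_⟩
    funext t
    have := congrFun h t
    simp only [shift_iter_apply] at this ⊢
    rw [show t + (a + (b - a)) = t + b by omega, this]
  · refine ⟨a - b, b, by omega, ?_⟩
    funext t
    have := congrFun h t
    simp only [shift_iter_apply] at this ⊢
    rw [show t + (b + (a - b)) = t + a by omega, ← this]

lemma cyl_open {A : Type*} [TopologicalSpace A] [DiscreteTopology A] (ξ : ℕ → A) (N : ℕ) :
    IsOpen {w : ℕ → A | ∀ t < N, w t = ξ t} := by
  have : {w : ℕ → A | ∀ t < N, w t = ξ t}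
      = ⋂ t ∈ Finset.range N, (fun w : ℕ → A => w t) ⁻¹' {ξ t} := by
    ext w; simp [Finset.mem_range]
  rw [this]
  exact isOpen_biInter_finset fun t _ =>
    (continuous_apply t).isOpen_preimage _ (isOpen_discrete _)

lemma cyl_subset {A : Type*} [TopologicalSpace A] [DiscreteTopology A]
    {U : Set (ℕ → A)} (hU : IsOpen U) {ξ : ℕ → A} (hξ : ξ ∈ U) :
    ∃ N, ∀ w : ℕ → A, (∀ t < N, w t = ξ t) → w ∈ U := by
  have hmem : U ∈ nhds ξ := hU.mem_nhds hξ
  rw [nhds_pi, Filter.mem_pi] at hmem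
  obtain ⟨I, hI, t, ht, hsub⟩ := hmem
  obtain ⟨N, hN⟩ := hI.bddAbove
  refine ⟨N + 1, fun w hw => hsub ?_⟩
  intro i hi
  rw [hw i (Nat.lt_succ_of_le (hN hi))]
  exact mem_of_mem_nhds (ht i)

lemma cont_cyl {A C : Type*} [TopologicalSpace A] [DiscreteTopology A]
    [TopologicalSpace C] [DiscreteTopology C]
    {X : Set (ℕ → A)} {f : (ℕ → A) → C} (hf : ContinuousOn f X) {ξ : ℕ → A} (hξ : ξ ∈ X) :
    ∃ N, ∀ w ∈ X, (∀ t < N, w t = ξ t) → f w = f ξ := by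
  have h1 : f ⁻¹' {f ξ} ∈ nhdsWithin ξ X :=
    (hf ξ hξ) ((isOpen_discrete ({f ξ} : Set C)).mem_nhds rfl)
  rw [mem_nhdsWithin] at h1
  obtain ⟨U, hUo, hξU, hsub⟩ := h1
  obtain ⟨N, hN⟩ := cyl_subset hUo hξU
  exact ⟨N, fun w hwX hw => hsub ⟨hN w hw, hwX⟩⟩

lemma cocycle_iter {A B : Type*} [TopologicalSpace A] {X : Set (ℕ → A)}
    (hX : IsShiftSpace X) {h : (ℕ → A) → (ℕ → B)} {kX lX : (ℕ → A) → ℕ}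
    (hcocX : ∀ x ∈ X, shiftMap^[lX x] (h x) = shiftMap^[kX x] (h (shiftMap x)))
    (n : ℕ) {x : ℕ → A} (hx : x ∈ X) :
    shiftMap^[∑ i ∈ Finset.range n, lX (shiftMap^[i] x)] (h x)
      = shiftMap^[∑ i ∈ Finset.range n, kX (shiftMap^[i] x)] (h (shiftMap^[n] x)) := by
  induction n with
  | zero => simp
  | succ n ih =>
    rw [Finset.sum_range_succ, Finset.sum_range_succ]
    have h1 := hcocX _ (mem_iter hX n hx)
    calc shiftMap^[(∑ i ∈ Finset.range n, lX (shiftMap^[i] x)) + lX (shiftMap^[n] x)] (h x)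
        = shiftMap^[lX (shiftMap^[n] x)]
            (shiftMap^[∑ i ∈ Finset.range n, lX (shiftMap^[i] x)] (h x)) := by
          rw [add_comm, Function.iterate_add_apply]
      _ = shiftMap^[lX (shiftMap^[n] x)]
            (shiftMap^[∑ i ∈ Finset.range n, kX (shiftMap^[i] x)] (h (shiftMap^[n] x))) := by
          rw [ih]
      _ = shiftMap^[∑ i ∈ Finset.range n, kX (shiftMap^[i] x)]
            (shiftMap^[lX (shiftMap^[n] x)] (h (shiftMap^[n] x))) := by
          rw [← Function.iterate_add_apply, ← Function.iterate_add_apply, add_comm]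
      _ = shiftMap^[∑ i ∈ Finset.range n, kX (shiftMap^[i] x)]
            (shiftMap^[kX (shiftMap^[n] x)] (h (shiftMap (shiftMap^[n] x)))) := by
          rw [h1]
      _ = shiftMap^[(∑ i ∈ Finset.range n, kX (shiftMap^[i] x)) + kX (shiftMap^[n] x)]
            (h (shiftMap^[n+1] x)) := by
          rw [Function.iterate_succ_apply', ← Function.iterate_add_apply]

lemma per_coord {A : Type*} {z : ℕ → A} {p : ℕ} (hz : shiftMap^[p] z = z) :
    ∀ (k t : ℕ), z (t + k * p) = z t := by
  intro k
  induction k with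
  | zero => simp
  | succ k ih =>
    intro t
    have h1 := congrFun hz (t + k * p)
    rw [shift_iter_apply] at h1
    have h2 : t + (k + 1) * p = t + k * p + p := by ring
    rw [h2, h1, ih]

/-- If neither `X` nor `Y` contains an aperiodic isolated point, then every
continuous orbit equivalence `h : X → Y` maps eventually periodic points to
eventually periodic points. -/
theorem coe_preserves_eventuallyPeriodic {A B : Type*} [Fintype A]
    [TopologicalSpace A] [DiscreteTopology A] [Fintype B] [TopologicalSpace B]
    [DiscreteTopology B]
    (X : Set (ℕ → A)) (Y : Set (ℕ → B))
    (hX : IsShiftSpace X) (hY : IsShiftSpace Y)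
    (hXiso : ∀ x ∈ X, IsolatedIn X x → EventuallyPeriodic x)
    (hYiso : ∀ y ∈ Y, IsolatedIn Y y → EventuallyPeriodic y)
    (h : (ℕ → A) → (ℕ → B)) (h' : (ℕ → B) → (ℕ → A))
    (kX lX : (ℕ → A) → ℕ) (kY lY : (ℕ → B) → ℕ)
    (hm : MapsTo h X Y) (hm' : MapsTo h' Y X)
    (hleft : ∀ x ∈ X, h' (h x) = x) (hright : ∀ y ∈ Y, h (h' y) = y)
    (hc : ContinuousOn h X) (hc' : ContinuousOn h' Y)
    (hkXc : ContinuousOn kX X) (hlXc : ContinuousOn lX X)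
    (hkYc : ContinuousOn kY Y) (hlYc : ContinuousOn lY Y)
    (hcocX : ∀ x ∈ X, shiftMap^[lX x] (h x) = shiftMap^[kX x] (h (shiftMap x)))
    (hcocY : ∀ y ∈ Y, shiftMap^[lY y] (h' y) = shiftMap^[kY y] (h' (shiftMap y))) :
    ∀ x ∈ X, EventuallyPeriodic x → EventuallyPeriodic (h x) := by
  classical
  intro x hx hep
  obtain ⟨p, m, hp, hper⟩ := hep
  set z := shiftMap^[m] x with hzdef
  have hzX : z ∈ X := mem_iter hX m hx
  have hzper : shiftMap^[p] z = z := by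
    show shiftMap^[p] (shiftMap^[m] x) = shiftMap^[m] x
    rw [← Function.iterate_add_apply, show p + m = m + p from Nat.add_comm p m]
    exact hper
  suffices hkey : EventuallyPeriodic (h z) by
    refine ep_unshift (∑ i ∈ Finset.range m, lX (shiftMap^[i] x)) ?_
    rw [cocycle_iter hX hcocX m hx]
    exact ep_shift _ hkey
  set L := ∑ i ∈ Finset.range p, lX (shiftMap^[i] z) with hL
  set K := ∑ i ∈ Finset.range p, kX (shiftMap^[i] z) with hK
  have hcoz : shiftMap^[L] (h z) = shiftMap^[K] (h z) := by
    rw [hL, hK]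
    have hcz := cocycle_iter hX hcocX p hzX
    rwa [hzper] at hcz
  by_cases hLK : L = K
  · -- Degenerate case: show z is isolated, transfer isolation, use hYiso.
    have hiso : IsolatedIn X z := by
      by_contra hniso
      have hNl : ∀ i : ℕ, ∃ N, ∀ w ∈ X, (∀ t < N, w t = shiftMap^[i] z t) →
          lX w = lX (shiftMap^[i] z) ∧ kX w = kX (shiftMap^[i] z) := by
        intro i
        obtain ⟨N1, hN1⟩ := cont_cyl hlXc (mem_iter hX i hzX)
        obtain ⟨N2, hN2⟩ := cont_cyl hkXc (mem_iter hX i hzX)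
        exact ⟨max N1 N2, fun w hw hwt =>
          ⟨hN1 w hw (fun t ht => hwt t (lt_of_lt_of_le ht (le_max_left _ _))),
           hN2 w hw (fun t ht => hwt t (lt_of_lt_of_le ht (le_max_right _ _)))⟩⟩
      choose Nf hNf using hNl
      set N := (Finset.range p).sup Nf with hNdef
      set J := Fintype.card B ^ L with hJ
      set M := N + (J + 1) * p + 1 with hM
      have hzmem : z ∈ {w : ℕ → A | ∀ t < M, w t = z t} ∩ X := ⟨fun t _ => rfl, hzX⟩
      obtain ⟨w, hwmem, hwz⟩ : ∃ w ∈ {w : ℕ → A | ∀ t < M, w t = z t} ∩ X, w ≠ z := by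
        by_contra hcon
        push_neg at hcon
        exact hniso ⟨_, cyl_open z M, Set.eq_singleton_iff_unique_mem.2 ⟨hzmem, hcon⟩⟩
      obtain ⟨hwcyl, hwX⟩ := hwmem
      have hdne : ∃ t, w t ≠ z t := Function.ne_iff.1 hwz
      have hdd : w (Nat.find hdne) ≠ z (Nat.find hdne) := Nat.find_spec hdne
      set d := Nat.find hdne with hd
      have hdmin : ∀ t < d, w t = z t := fun t ht => not_not.1 (Nat.find_min hdne (hd ▸ ht))
      have hdM : M ≤ d := by
        by_contra hcon
        exact hdd (hwcyl d (by omega))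
      have hzp := per_coord hzper
      have hprod : ∀ j, j ≤ J → N + j * p + p + 1 ≤ d := by
        intro j hj
        have h1 : (j + 1) * p ≤ (J + 1) * p := mul_le_mul_left (by omega) p
        have h2 : j * p + p = (j + 1) * p := by ring
        linarith [hdM, hM]
      have step : ∀ v ∈ X, (∀ t < N + p, v t = z t) →
          shiftMap^[L] (h v) = shiftMap^[L] (h (shiftMap^[p] v)) := by
        intro v hvX hvz
        have hsl : ∀ i < p, lX (shiftMap^[i] v) = lX (shiftMap^[i] z)
            ∧ kX (shiftMap^[i] v) = kX (shiftMap^[i] z) := by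
          intro i hi
          apply hNf i _ (mem_iter hX i hvX)
          intro t ht
          have hNi : Nf i ≤ N := Finset.le_sup (Finset.mem_range.2 hi)
          rw [shift_iter_apply, shift_iter_apply]
          exact hvz (t + i) (by omega)
        have hc2 := cocycle_iter hX hcocX p hvX
        have e1 : ∑ i ∈ Finset.range p, lX (shiftMap^[i] v) = L := by
          rw [hL]; exact Finset.sum_congr rfl fun i hi => (hsl i (Finset.mem_range.1 hi)).1
        have e2 : ∑ i ∈ Finset.range p, kX (shiftMap^[i] v) = K := by
          rw [hK]; exact Finset.sum_congr rfl fun i hi => (hsl i (Finset.mem_range.1 hi)).2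
        rw [e1, e2, ← hLK] at hc2
        exact hc2
      have claimA : ∀ j t, t + j * p < d → shiftMap^[j * p] w t = z t := by
        intro j t hlt
        rw [shift_iter_apply, hdmin _ hlt, hzp]
      have claimC : ∀ a b : ℕ, a < b → b ≤ J → shiftMap^[a * p] w ≠ shiftMap^[b * p] w := by
        intro a b hab hbJ hEq
        have hb : b * p + p ≤ d := by have := hprod b hbJ; linarith
        have hmul : a * p + (b - a) * p = b * p := by
          rw [← Nat.add_mul]
          congr 1
          omega
        have hpe : p ≤ (b - a) * p := by
          have h1 : 1 * p ≤ (b - a) * p := mul_le_mul_left (by omega) p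
          simpa using h1
        have hcf := congrFun hEq (d - b * p)
        rw [shift_iter_apply, shift_iter_apply] at hcf
        have e1 : d - b * p + b * p = d := Nat.sub_add_cancel (by linarith)
        have e2 : d - b * p + a * p + (b - a) * p = d := by rw [add_assoc, hmul]; exact e1
        have hlt : d - b * p + a * p < d := by linarith
        have h3 : w (d - b * p + a * p) = z (d - b * p + a * p) := hdmin _ hlt
        have h4 := hzp (b - a) (d - b * p + a * p)
        rw [e2] at h4
        rw [e1] at hcf
        exact hdd (by rw [← hcf, h3, ← h4])
      have claimD : ∀ j, j ≤ J → shiftMap^[L] (h w) = shiftMap^[L] (h (shiftMap^[j * p] w)) := by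
        intro j
        induction j with
        | zero => intro _; simp
        | succ j ih =>
          intro hj
          have hjJ : j ≤ J := by omega
          have hagree : ∀ t < N + p, shiftMap^[j * p] w t = z t := by
            intro t ht
            apply claimA
            have := hprod j hjJ
            linarith
          have hs := step (shiftMap^[j * p] w) (mem_iter hX _ hwX) hagree
          have harg : shiftMap^[p] (shiftMap^[j * p] w) = shiftMap^[(j + 1) * p] w := by
            rw [← Function.iterate_add_apply]
            congr 1
            ring
          rw [harg] at hs
          rw [ih hjJ, hs]
      have hcard : Fintype.card (Fin L → B) < Fintype.card (Fin (J + 1)) := by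
        rw [Fintype.card_fun, Fintype.card_fin, Fintype.card_fin, ← hJ]
        omega
      obtain ⟨j, j', hne, heqf⟩ := Fintype.exists_ne_map_eq_of_card_lt
        (fun a : Fin (J + 1) => fun t : Fin L => h (shiftMap^[(a : ℕ) * p] w) (t : ℕ)) hcard
      have himg : h (shiftMap^[(j : ℕ) * p] w) = h (shiftMap^[(j' : ℕ) * p] w) := by
        funext t
        by_cases ht : t < L
        · exact congrFun heqf ⟨t, ht⟩
        · have hDj := claimD (j : ℕ) (Nat.lt_succ_iff.1 j.isLt)
          have hDj' := claimD (j' : ℕ) (Nat.lt_succ_iff.1 j'.isLt)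
          have hcmb := congrFun (hDj.symm.trans hDj') (t - L)
          rw [shift_iter_apply, shift_iter_apply] at hcmb
          rwa [Nat.sub_add_cancel (by omega)] at hcmb
      have huj : shiftMap^[(j : ℕ) * p] w = shiftMap^[(j' : ℕ) * p] w := by
        have h1 := hleft _ (mem_iter hX ((j : ℕ) * p) hwX)
        have h2 := hleft _ (mem_iter hX ((j' : ℕ) * p) hwX)
        rw [← h1, ← h2, himg]
      rcases Nat.lt_trichotomy (j : ℕ) (j' : ℕ) with hlt | heq | hlt
      · exact claimC _ _ hlt (Nat.lt_succ_iff.1 j'.isLt) huj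
      · exact hne (Fin.ext heq)
      · exact claimC _ _ hlt (Nat.lt_succ_iff.1 j.isLt) huj.symm
    -- transfer isolation through h
    obtain ⟨U, hUo, hUX⟩ := hiso
    have hzU : z ∈ U := by
      have hz1 : z ∈ U ∩ X := by rw [hUX]; exact rfl
      exact hz1.1
    have hyY : h z ∈ Y := hm hzX
    have hh'y : h' (h z) = z := hleft z hzX
    have hpre : h' ⁻¹' U ∈ nhdsWithin (h z) Y :=
      (hc' (h z) hyY) (hUo.mem_nhds (by rw [hh'y]; exact hzU))
    rw [mem_nhdsWithin] at hpre
    obtain ⟨V, hVo, hyV, hVsub⟩ := hpre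
    refine hYiso (h z) hyY ⟨V, hVo, ?_⟩
    apply Set.eq_singleton_iff_unique_mem.2
    refine ⟨⟨hyV, hyY⟩, ?_⟩
    rintro v ⟨hvV, hvY⟩
    have hv1 : h' v ∈ U ∩ X := ⟨hVsub ⟨hvV, hvY⟩, hm' hvY⟩
    rw [hUX] at hv1
    have hv2 : h' v = z := hv1
    calc v = h (h' v) := (hright v hvY).symm
      _ = h z := by rw [hv2]
  · exact ep_of_ne hLK hcoz
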